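/- The number of decoding steps needed to fully decode an encoded string graph H equals the number of encoding edges in H, and the fully decoded graph is unique up to isomorphism. -/

import Mathlib

/-- Vertex labels: node-vertex labels, wire-vertex labels, and nonterminal labels. -/
inductive VLab : Type
  | node : ℕ → VLab
  | wire : ℕ → VLab
  | nt : ℕ → VLab
  deriving DecidableEq

/-- Edge labels: plain (terminal) labels and encoding labels. -/
inductive ELab : Type
  | plain : ℕ → ELab
  | enc : ℕ → ELab
  deriving DecidableEq

def VLab.isNode : VLab → Bool | .node _ => true | _ => false
def VLab.isWire : VLab → Bool | .wire _ => true | _ => false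
def VLab.isNT : VLab → Bool | .nt _ => true | _ => false
def ELab.isEnc : ELab → Bool | .enc _ => true | _ => false

/-- A finite labelled directed graph with vertices drawn from ℕ. -/
structure SGraph : Type where
  V : Finset ℕ
  E : Finset (ℕ × ELab × ℕ)
  lab : ℕ → VLab

def inDeg (H : SGraph) (v : ℕ) : ℕ := (H.E.filter (fun e => e.2.2 = v)).card
def outDeg (H : SGraph) (v : ℕ) : ℕ := (H.E.filter (fun e => e.1 = v)).card

/-- Edges connect distinct vertices of the graph (no self-loops). -/
def WellFormed (H : SGraph) : Prop := ∀ e ∈ H.E, e.1 ∈ H.V ∧ e.2.2 ∈ H.V ∧ e.1 ≠ e.2.2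

/-- A string graph: wire-vertices have in/out-degree at most one, no encoding
edges, and node-vertices are adjacent only to wire-vertices. -/
def StringGraph (H : SGraph) : Prop :=
  WellFormed H ∧
  (∀ v ∈ H.V, (H.lab v).isNode = true ∨ (H.lab v).isWire = true) ∧
  (∀ v ∈ H.V, (H.lab v).isWire = true → inDeg H v ≤ 1 ∧ outDeg H v ≤ 1) ∧
  (∀ e ∈ H.E, e.2.1.isEnc = false) ∧
  (∀ e ∈ H.E, ¬((H.lab e.1).isNode = true ∧ (H.lab e.2.2).isNode = true))

/-- An encoded string graph: like a string graph but encoding-labelled edges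
between node-vertices are allowed. -/
def EncodedSG (H : SGraph) : Prop :=
  WellFormed H ∧
  (∀ v ∈ H.V, (H.lab v).isNode = true ∨ (H.lab v).isWire = true) ∧
  (∀ v ∈ H.V, (H.lab v).isWire = true → inDeg H v ≤ 1 ∧ outDeg H v ≤ 1) ∧
  (∀ e ∈ H.E, if e.2.1.isEnc = true
    then (H.lab e.1).isNode = true ∧ (H.lab e.2.2).isNode = true
    else ¬((H.lab e.1).isNode = true ∧ (H.lab e.2.2).isNode = true))

/-- Number of encoding edges. -/
def encCount (H : SGraph) : ℕ := (H.E.filter (fun e => e.2.1.isEnc = true)).card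

def isInput (H : SGraph) (v : ℕ) : Prop := (H.lab v).isWire = true ∧ inDeg H v = 0
def isOutput (H : SGraph) (v : ℕ) : Prop := (H.lab v).isWire = true ∧ outDeg H v = 0

/-- A decoding rule: a replacement fragment with two distinguished node-vertices. -/
structure DecRule : Type where
  F : SGraph
  src : ℕ
  tgt : ℕ

/-- A decoding system: one rule for every triple (encoding label, node label, node label). -/
structure DecSystem : Type where
  rule : ℕ → ℕ → ℕ → DecRule

/-- The rule for (α,σ₁,σ₂) has as RHS a string graph on the two node-vertices with at
least one additional vertex and no inputs, outputs or encoding edges. -/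
def ValidDecRule (R : DecRule) (s1 s2 : ℕ) : Prop :=
  R.src ∈ R.F.V ∧ R.tgt ∈ R.F.V ∧ R.src ≠ R.tgt ∧
  R.F.lab R.src = VLab.node s1 ∧ R.F.lab R.tgt = VLab.node s2 ∧
  StringGraph R.F ∧ 3 ≤ R.F.V.card ∧
  (∀ v ∈ R.F.V, (R.F.lab v).isNode = true → v = R.src ∨ v = R.tgt) ∧
  (∀ v ∈ R.F.V, (R.F.lab v).isWire = true → inDeg R.F v = 1 ∧ outDeg R.F v = 1)

def ValidDecSystem (T : DecSystem) : Prop := ∀ a s1 s2, ValidDecRule (T.rule a s1 s2) s1 s2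

/-- One DPO decoding step: remove one encoding edge and glue in a fresh copy of the
corresponding rule's right-hand side on its two endpoints. -/
def DecStep (T : DecSystem) (H H' : SGraph) : Prop :=
  ∃ u a w s1 s2, (u, ELab.enc a, w) ∈ H.E ∧
    H.lab u = VLab.node s1 ∧ H.lab w = VLab.node s2 ∧
    ∃ ρ : ℕ → ℕ,
      Set.InjOn ρ ↑(T.rule a s1 s2).F.V ∧
      ρ (T.rule a s1 s2).src = u ∧ ρ (T.rule a s1 s2).tgt = w ∧
      (∀ x ∈ (T.rule a s1 s2).F.V, x ≠ (T.rule a s1 s2).src → x ≠ (T.rule a s1 s2).tgt →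
        ρ x ∉ H.V) ∧
      H'.V = H.V ∪ (T.rule a s1 s2).F.V.image ρ ∧
      H'.E = (H.E.erase (u, ELab.enc a, w)) ∪
        (T.rule a s1 s2).F.E.image (fun e => (ρ e.1, e.2.1, ρ e.2.2)) ∧
      (∀ v ∈ H.V, H'.lab v = H.lab v) ∧
      (∀ x ∈ (T.rule a s1 s2).F.V, H'.lab (ρ x) = (T.rule a s1 s2).F.lab x)

/-- Full decoding: exhaustive application of the decoding system. -/
def FullDecode (T : DecSystem) (H H' : SGraph) : Prop :=
  Relation.ReflTransGen (DecStep T) H H' ∧ encCount H' = 0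

/-- SGraph isomorphism. -/
def GIso (H K : SGraph) : Prop :=
  ∃ f : ℕ → ℕ, Set.BijOn f ↑H.V ↑K.V ∧
    (∀ v ∈ H.V, K.lab (f v) = H.lab v) ∧
    (∀ u l w, u ∈ H.V → w ∈ H.V → ((u, l, w) ∈ H.E ↔ (f u, l, f w) ∈ K.E))

/-- Exactly `n` decoding steps. -/
def DecStepN (T : DecSystem) : ℕ → SGraph → SGraph → Prop
  | 0 => fun H H' => H = H'
  | n + 1 => fun H H' => ∃ K, DecStep T H K ∧ DecStepN T n K H'

/-! ### Auxiliary development -/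

open Finset

/-- Invariant: well-formed and every encoding edge joins node-labelled vertices. -/
def GInv (H : SGraph) : Prop :=
  WellFormed H ∧ ∀ e ∈ H.E, e.2.1.isEnc = true →
    (∃ s, H.lab e.1 = VLab.node s) ∧ (∃ s, H.lab e.2.2 = VLab.node s)

/-- A decoding step at a specified encoding edge. -/
def StepAt (T : DecSystem) (u a w s1 s2 : ℕ) (H H' : SGraph) : Prop :=
  (u, ELab.enc a, w) ∈ H.E ∧
    H.lab u = VLab.node s1 ∧ H.lab w = VLab.node s2 ∧
    ∃ ρ : ℕ → ℕ,
      Set.InjOn ρ ↑(T.rule a s1 s2).F.V ∧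
      ρ (T.rule a s1 s2).src = u ∧ ρ (T.rule a s1 s2).tgt = w ∧
      (∀ x ∈ (T.rule a s1 s2).F.V, x ≠ (T.rule a s1 s2).src → x ≠ (T.rule a s1 s2).tgt →
        ρ x ∉ H.V) ∧
      H'.V = H.V ∪ (T.rule a s1 s2).F.V.image ρ ∧
      H'.E = (H.E.erase (u, ELab.enc a, w)) ∪
        (T.rule a s1 s2).F.E.image (fun e => (ρ e.1, e.2.1, ρ e.2.2)) ∧
      (∀ v ∈ H.V, H'.lab v = H.lab v) ∧
      (∀ x ∈ (T.rule a s1 s2).F.V, H'.lab (ρ x) = (T.rule a s1 s2).F.lab x)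

lemma decStep_iff {T : DecSystem} {H H' : SGraph} :
    DecStep T H H' ↔ ∃ u a w s1 s2, StepAt T u a w s1 s2 H H' := Iff.rfl

lemma rule_wf {T : DecSystem} (hT : ValidDecSystem T) (a s1 s2 : ℕ) :
    WellFormed (T.rule a s1 s2).F := (hT a s1 s2).2.2.2.2.2.1.1

lemma rule_noenc {T : DecSystem} (hT : ValidDecSystem T) (a s1 s2 : ℕ) :
    ∀ e ∈ (T.rule a s1 s2).F.E, e.2.1.isEnc = false :=
  (hT a s1 s2).2.2.2.2.2.1.2.2.2.1

lemma node_of_isNode {l : VLab} (h : l.isNode = true) : ∃ s, l = VLab.node s := by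
  cases l <;> simp [VLab.isNode] at h ⊢

lemma inv_of_encoded {H : SGraph} (hH : EncodedSG H) : GInv H := by
  refine ⟨hH.1, fun e he henc => ?_⟩
  have h := hH.2.2.2 e he
  rw [if_pos henc] at h
  exact ⟨node_of_isNode h.1, node_of_isNode h.2⟩
lemma step_encCount {T : DecSystem} (hT : ValidDecSystem T) {u a w s1 s2 : ℕ} {H K : SGraph}
    (h : StepAt T u a w s1 s2 H K) : encCount K + 1 = encCount H := by
  obtain ⟨he, _, _, ρ, _, _, _, _, _, hE, _, _⟩ := h
  have hnoenc := rule_noenc hT a s1 s2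
  unfold encCount
  rw [hE, Finset.filter_union]
  have h1 : ((T.rule a s1 s2).F.E.image (fun e => (ρ e.1, e.2.1, ρ e.2.2))).filter
      (fun e => e.2.1.isEnc = true) = ∅ := by
    rw [Finset.filter_eq_empty_iff]
    rintro ⟨p, l, q⟩ hmem
    obtain ⟨⟨x, l', y⟩, hxy, heq⟩ := Finset.mem_image.1 hmem
    obtain ⟨rfl, rfl, rfl⟩ := Prod.mk.injEq .. ▸ heq
    simpa using hnoenc _ hxy
  rw [h1, Finset.union_empty, Finset.filter_erase]
  have he' : (u, ELab.enc a, w) ∈ H.E.filter (fun e => e.2.1.isEnc = true) :=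
    Finset.mem_filter.2 ⟨he, rfl⟩
  rw [Finset.card_erase_of_mem he']
  have := Finset.card_pos.2 ⟨_, he'⟩
  omega

lemma step_inv {T : DecSystem} (hT : ValidDecSystem T) {u a w s1 s2 : ℕ} {H K : SGraph}
    (hI : GInv H) (h : StepAt T u a w s1 s2 H K) : GInv K := by
  obtain ⟨he, hlu, hlw, ρ, hinj, hsrc, htgt, hfresh, hV, hE, hold, hnew⟩ := h
  have hWF := hI.1
  have hWFF := rule_wf hT a s1 s2
  have hnoenc := rule_noenc hT a s1 s2
  constructor
  · rintro e hmem
    rw [hE] at hmem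
    rcases Finset.mem_union.1 hmem with hm | hm
    · have hmA : e ∈ H.E := Finset.mem_of_mem_erase hm
      obtain ⟨h1, h2, h3⟩ := hWF e hmA
      exact ⟨hV ▸ Finset.mem_union_left _ h1, hV ▸ Finset.mem_union_left _ h2, h3⟩
    · obtain ⟨⟨x, l, y⟩, hxy, heq⟩ := Finset.mem_image.1 hm
      obtain ⟨hx, hy, hxy'⟩ := hWFF _ hxy
      subst heq
      refine ⟨hV ▸ Finset.mem_union_right _ (Finset.mem_image_of_mem ρ hx),
        hV ▸ Finset.mem_union_right _ (Finset.mem_image_of_mem ρ hy), ?_⟩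
      exact fun hc => hxy' (hinj (Finset.mem_coe.2 hx) (Finset.mem_coe.2 hy) hc)
  · rintro e hmem henc
    rw [hE] at hmem
    rcases Finset.mem_union.1 hmem with hm | hm
    · have hmA : e ∈ H.E := Finset.mem_of_mem_erase hm
      obtain ⟨⟨t1, ht1⟩, ⟨t2, ht2⟩⟩ := hI.2 e hmA henc
      obtain ⟨h1, h2, _⟩ := hWF e hmA
      exact ⟨⟨t1, (hold _ h1).trans ht1⟩, ⟨t2, (hold _ h2).trans ht2⟩⟩
    · exfalso
      obtain ⟨⟨x, l, y⟩, hxy, heq⟩ := Finset.mem_image.1 hm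
      subst heq
      simp [hnoenc _ hxy] at henc

lemma exist_step {T : DecSystem} (hT : ValidDecSystem T) {H : SGraph} {u a w s1 s2 : ℕ}
    (hI : GInv H) (he : (u, ELab.enc a, w) ∈ H.E)
    (hlu : H.lab u = VLab.node s1) (hlw : H.lab w = VLab.node s2) :
    ∃ K, StepAt T u a w s1 s2 H K := by
  classical
  obtain ⟨huV, hwV, huw⟩ := hI.1 _ he
  set R := T.rule a s1 s2 with hR
  have hsrcne : R.src ≠ R.tgt := (hT a s1 s2).2.2.1
  have hlabsrc : R.F.lab R.src = VLab.node s1 := (hT a s1 s2).2.2.2.1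
  have hlabtgt : R.F.lab R.tgt = VLab.node s2 := (hT a s1 s2).2.2.2.2.1
  set M : ℕ := H.V.sup id + 1 with hM
  have hlt : ∀ v ∈ H.V, v < M := fun v hv =>
    Nat.lt_succ_of_le (Finset.le_sup (f := id) hv)
  set ρ : ℕ → ℕ := fun x => if x = R.src then u else if x = R.tgt then w else x + M with hρ
  have hρsrc : ρ R.src = u := by simp [hρ]
  have hρtgt : ρ R.tgt = w := by simp [hρ, hsrcne.symm]
  have hρinner : ∀ x, x ≠ R.src → x ≠ R.tgt → ρ x = x + M := by
    intro x h1 h2; simp [hρ, h1, h2]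
  have hfreshval : ∀ x, M ≤ x + M := fun x => Nat.le_add_left M x
  have hfresh : ∀ x ∈ R.F.V, x ≠ R.src → x ≠ R.tgt → ρ x ∉ H.V := by
    intro x _ h1 h2 hc
    rw [hρinner x h1 h2] at hc
    exact absurd (hlt _ hc) (Nat.not_lt.2 (hfreshval x))
  have huV' : u ∈ H.V := huV
  have hwV' : w ∈ H.V := hwV
  have huw' : u ≠ w := huw
  have hinj : Set.InjOn ρ ↑R.F.V := by
    intro x _ y _ hxy
    have hu1 : u < M := hlt u huV'
    have hw1 : w < M := hlt w hwV'
    rcases eq_or_ne x R.src with rfl | hxs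
    · rcases eq_or_ne y R.src with rfl | hys
      · rfl
      · rcases eq_or_ne y R.tgt with rfl | hyt
        · rw [hρsrc, hρtgt] at hxy; exact absurd hxy huw'
        · rw [hρsrc, hρinner y hys hyt] at hxy; omega
    · rcases eq_or_ne x R.tgt with rfl | hxt
      · rcases eq_or_ne y R.src with rfl | hys
        · rw [hρtgt, hρsrc] at hxy; exact absurd hxy.symm huw'
        · rcases eq_or_ne y R.tgt with rfl | hyt
          · rfl
          · rw [hρtgt, hρinner y hys hyt] at hxy; omega
      · rcases eq_or_ne y R.src with rfl | hys
        · rw [hρinner x hxs hxt, hρsrc] at hxy; omega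
        · rcases eq_or_ne y R.tgt with rfl | hyt
          · rw [hρinner x hxs hxt, hρtgt] at hxy; omega
          · rw [hρinner x hxs hxt, hρinner y hys hyt] at hxy; omega
  refine ⟨⟨H.V ∪ R.F.V.image ρ,
      (H.E.erase (u, ELab.enc a, w)) ∪ R.F.E.image (fun e => (ρ e.1, e.2.1, ρ e.2.2)),
      fun v => if v ∈ H.V then H.lab v else R.F.lab (v - M)⟩,
    he, hlu, hlw, ρ, hinj, hρsrc, hρtgt, hfresh, rfl, rfl, ?_, ?_⟩
  · intro v hv; simp [hv]
  · intro x hx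
    by_cases hxs : x = R.src
    · subst hxs; rw [hρsrc]; simp only [huV, if_pos]; rw [hlu, hlabsrc]
    by_cases hxt : x = R.tgt
    · subst hxt; rw [hρtgt]; simp only [hwV, if_pos]; rw [hlw, hlabtgt]
    · rw [hρinner x hxs hxt]
      have : x + M ∉ H.V := fun hc => absurd (hlt _ hc) (Nat.not_lt.2 (hfreshval x))
      simp [this]; rfl

lemma no_step_of_encZero {T : DecSystem} {H K : SGraph} (hz : encCount H = 0) :
    ¬ DecStep T H K := by
  rintro ⟨u, a, w, s1, s2, he, -⟩
  have : (u, ELab.enc a, w) ∈ H.E.filter (fun e => e.2.1.isEnc = true) :=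
    Finset.mem_filter.2 ⟨he, rfl⟩
  have := Finset.card_pos.2 ⟨_, this⟩
  unfold encCount at hz
  omega
lemma giso_refl (H : SGraph) : GIso H H :=
  ⟨id, Set.bijOn_id _, fun _ _ => rfl, fun _ _ _ _ _ => Iff.rfl⟩

lemma step_transport {T : DecSystem} (hT : ValidDecSystem T) {A B K K' : SGraph} {f : ℕ → ℕ}
    {u a w s1 s2 : ℕ}
    (hWA : WellFormed A) (hWB : WellFormed B)
    (hbij : Set.BijOn f ↑A.V ↑B.V) (hflab : ∀ v ∈ A.V, B.lab (f v) = A.lab v)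
    (hfedge : ∀ p l q, p ∈ A.V → q ∈ A.V → ((p, l, q) ∈ A.E ↔ (f p, l, f q) ∈ B.E))
    (h1 : StepAt T u a w s1 s2 A K) (h2 : StepAt T (f u) a (f w) s1 s2 B K') :
    GIso K K' := by
  classical
  obtain ⟨he, hlu, hlw, ρ, hinj, hsrc, htgt, hfresh, hV, hE, hold, hnew⟩ := h1
  obtain ⟨he', hlu', hlw', ρ', hinj', hsrc', htgt', hfresh', hV', hE', hold', hnew'⟩ := h2
  set R := T.rule a s1 s2 with hR
  have hWFF := rule_wf hT a s1 s2
  obtain ⟨huA, hwA, huw⟩ := hWA _ he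
  have huA : u ∈ A.V := huA
  have hwA : w ∈ A.V := hwA
  set g : ℕ → ℕ := fun v => if v ∈ A.V then f v else ρ' (Function.invFunOn ρ ↑R.F.V v) with hg
  have hgA : ∀ v ∈ A.V, g v = f v := fun v hv => if_pos hv
  have hgρ : ∀ x ∈ R.F.V, g (ρ x) = ρ' x := by
    intro x hx
    by_cases hxs : x = R.src
    · subst hxs; rw [hsrc, hgA u huA, ← hsrc']
    by_cases hxt : x = R.tgt
    · subst hxt; rw [htgt, hgA w hwA, ← htgt']
    · have hρx : ρ x ∉ A.V := hfresh x hx hxs hxt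
      have hinv : Function.invFunOn ρ ↑R.F.V (ρ x) = x :=
        hinj.leftInvOn_invFunOn (Finset.mem_coe.2 hx)
      simp only [hg, if_neg hρx, hinv]
  -- classification of K.V
  have hKmem : ∀ v ∈ K.V, v ∈ A.V ∨ ∃ x ∈ R.F.V, x ≠ R.src ∧ x ≠ R.tgt ∧ v = ρ x := by
    intro v hv
    rw [hV] at hv
    rcases Finset.mem_union.1 hv with h | h
    · exact Or.inl h
    · obtain ⟨x, hx, rfl⟩ := Finset.mem_image.1 h
      by_cases hxs : x = R.src
      · subst hxs; rw [hsrc]; exact Or.inl huA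
      by_cases hxt : x = R.tgt
      · subst hxt; rw [htgt]; exact Or.inl hwA
      · exact Or.inr ⟨x, hx, hxs, hxt, rfl⟩
  have hK'mem : ∀ v ∈ K'.V, v ∈ B.V ∨ ∃ x ∈ R.F.V, x ≠ R.src ∧ x ≠ R.tgt ∧ v = ρ' x := by
    intro v hv
    rw [hV'] at hv
    rcases Finset.mem_union.1 hv with h | h
    · exact Or.inl h
    · obtain ⟨x, hx, rfl⟩ := Finset.mem_image.1 h
      by_cases hxs : x = R.src
      · subst hxs; rw [hsrc']; exact Or.inl (hbij.mapsTo huA)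
      by_cases hxt : x = R.tgt
      · subst hxt; rw [htgt']; exact Or.inl (hbij.mapsTo hwA)
      · exact Or.inr ⟨x, hx, hxs, hxt, rfl⟩
  have hAK : A.V ⊆ K.V := hV ▸ Finset.subset_union_left
  have hBK' : B.V ⊆ K'.V := hV' ▸ Finset.subset_union_left
  have hρK : ∀ x ∈ R.F.V, ρ x ∈ K.V := fun x hx =>
    hV ▸ Finset.mem_union_right _ (Finset.mem_image_of_mem ρ hx)
  have hρ'K' : ∀ x ∈ R.F.V, ρ' x ∈ K'.V := fun x hx =>
    hV' ▸ Finset.mem_union_right _ (Finset.mem_image_of_mem ρ' hx)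
  -- g p = ρ' x  →  p = ρ x  (for p ∈ K.V, x ∈ F.V)
  have hback : ∀ p ∈ K.V, ∀ x ∈ R.F.V, g p = ρ' x → p = ρ x := by
    intro p hp x hx hgp
    rcases hKmem p hp with hpA | ⟨x0, hx0, hx0s, hx0t, rfl⟩
    · rw [hgA p hpA] at hgp
      by_cases hxs : x = R.src
      · subst hxs
        rw [hsrc'] at hgp
        rw [hsrc, hbij.injOn (Finset.mem_coe.2 hpA) (Finset.mem_coe.2 huA) hgp]
      by_cases hxt : x = R.tgt
      · subst hxt
        rw [htgt'] at hgp
        rw [htgt, hbij.injOn (Finset.mem_coe.2 hpA) (Finset.mem_coe.2 hwA) hgp]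
      · exact absurd (hgp ▸ hbij.mapsTo (Finset.mem_coe.2 hpA))
          (hfresh' x hx hxs hxt)
    · rw [hgρ x0 hx0] at hgp
      rw [hinj' (Finset.mem_coe.2 hx0) (Finset.mem_coe.2 hx) hgp]
  refine ⟨g, ⟨?_, ?_, ?_⟩, ?_, ?_⟩
  · -- MapsTo
    intro v hv
    rcases hKmem v (Finset.mem_coe.1 hv) with hvA | ⟨x, hx, _, _, rfl⟩
    · rw [hgA v hvA]; exact Finset.mem_coe.2 (hBK' (hbij.mapsTo hvA))
    · rw [hgρ x hx]; exact Finset.mem_coe.2 (hρ'K' x hx)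
  · -- InjOn
    intro v1 hv1 v2 hv2 hgv
    rcases hKmem v1 (Finset.mem_coe.1 hv1) with h1A | ⟨x1, hx1, hx1s, hx1t, rfl⟩
    · rcases hKmem v2 (Finset.mem_coe.1 hv2) with h2A | ⟨x2, hx2, hx2s, hx2t, rfl⟩
      · rw [hgA v1 h1A, hgA v2 h2A] at hgv
        exact hbij.injOn (Finset.mem_coe.2 h1A) (Finset.mem_coe.2 h2A) hgv
      · rw [hgA v1 h1A, hgρ x2 hx2] at hgv
        exact absurd (hgv ▸ hbij.mapsTo (Finset.mem_coe.2 h1A))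
          (hfresh' x2 hx2 hx2s hx2t)
    · rcases hKmem v2 (Finset.mem_coe.1 hv2) with h2A | ⟨x2, hx2, hx2s, hx2t, rfl⟩
      · rw [hgρ x1 hx1, hgA v2 h2A] at hgv
        exact absurd (hgv ▸ hbij.mapsTo (Finset.mem_coe.2 h2A))
          (hfresh' x1 hx1 hx1s hx1t)
      · rw [hgρ x1 hx1, hgρ x2 hx2] at hgv
        rw [hinj' (Finset.mem_coe.2 hx1) (Finset.mem_coe.2 hx2) hgv]
  · -- SurjOn
    intro t ht
    rcases hK'mem t (Finset.mem_coe.1 ht) with htB | ⟨x, hx, _, _, rfl⟩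
    · obtain ⟨v, hvA, rfl⟩ := hbij.surjOn (Finset.mem_coe.2 htB)
      exact ⟨v, Finset.mem_coe.2 (hAK (Finset.mem_coe.1 hvA)),
        hgA v (Finset.mem_coe.1 hvA)⟩
    · exact ⟨ρ x, Finset.mem_coe.2 (hρK x hx), hgρ x hx⟩
  · -- labels
    intro v hv
    rcases hKmem v hv with hvA | ⟨x, hx, _, _, rfl⟩
    · rw [hgA v hvA, hold' _ (hbij.mapsTo hvA), hflab v hvA, hold v hvA]
    · rw [hgρ x hx, hnew' x hx, hnew x hx]
  · -- edges
    intro p l q hp hq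
    constructor
    · intro hm
      rw [hE] at hm
      rcases Finset.mem_union.1 hm with hme | hmi
      · obtain ⟨hne, hpE⟩ := Finset.mem_erase.1 hme
        obtain ⟨hpA, hqA, -⟩ := hWA _ hpE
        have hpA : p ∈ A.V := hpA
        have hqA : q ∈ A.V := hqA
        rw [hE', hgA p hpA, hgA q hqA]
        refine Finset.mem_union_left _ (Finset.mem_erase.2 ⟨?_, (hfedge p l q hpA hqA).1 hpE⟩)
        intro hc
        have hc1 : f p = f u := congrArg Prod.fst hc
        have hc2 : l = ELab.enc a := congrArg (fun e => e.2.1) hc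
        have hc3 : f q = f w := congrArg (fun e => e.2.2) hc
        exact hne (by
          rw [hbij.injOn (Finset.mem_coe.2 hpA) (Finset.mem_coe.2 huA) hc1,
            hbij.injOn (Finset.mem_coe.2 hqA) (Finset.mem_coe.2 hwA) hc3, hc2])
      · obtain ⟨⟨x, lx, y⟩, hxy, heq⟩ := Finset.mem_image.1 hmi
        obtain ⟨hxV, hyV, -⟩ := hWFF _ hxy
        obtain ⟨rfl, rfl, rfl⟩ := Prod.mk.injEq .. ▸ heq
        rw [hE', hgρ x hxV, hgρ y hyV]
        exact Finset.mem_union_right _ (Finset.mem_image_of_mem _ hxy)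
    · intro hm
      rw [hE'] at hm
      rcases Finset.mem_union.1 hm with hme | hmi
      · obtain ⟨hne, hpE⟩ := Finset.mem_erase.1 hme
        obtain ⟨hgpB, hgqB, -⟩ := hWB _ hpE
        have hgpB : g p ∈ B.V := hgpB
        have hgqB : g q ∈ B.V := hgqB
        have hpA : p ∈ A.V := by
          rcases hKmem p hp with h | ⟨x, hx, hxs, hxt, rfl⟩
          · exact h
          · rw [hgρ x hx] at hgpB; exact absurd hgpB (hfresh' x hx hxs hxt)
        have hqA : q ∈ A.V := by
          rcases hKmem q hq with h | ⟨x, hx, hxs, hxt, rfl⟩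
          · exact h
          · rw [hgρ x hx] at hgqB; exact absurd hgqB (hfresh' x hx hxs hxt)
        rw [hgA p hpA, hgA q hqA] at hpE hne
        have hAE : (p, l, q) ∈ A.E := (hfedge p l q hpA hqA).2 hpE
        rw [hE]
        refine Finset.mem_union_left _ (Finset.mem_erase.2 ⟨?_, hAE⟩)
        rintro hc
        obtain ⟨rfl, rfl, rfl⟩ := Prod.mk.injEq .. ▸ hc
        exact hne rfl
      · obtain ⟨⟨x, lx, y⟩, hxy, heq⟩ := Finset.mem_image.1 hmi
        obtain ⟨hxV, hyV, -⟩ := hWFF _ hxy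
        have hgp : ρ' x = g p := congrArg Prod.fst heq
        have hl : lx = l := congrArg (fun e => e.2.1) heq
        have hgq : ρ' y = g q := congrArg (fun e => e.2.2) heq
        have hpx : p = ρ x := hback p hp x hxV hgp.symm
        have hqy : q = ρ y := hback q hq y hyV hgq.symm
        rw [hE, hpx, hqy, ← hl]
        exact Finset.mem_union_right _ (Finset.mem_image_of_mem _ hxy)
lemma step_commute {T : DecSystem} (hT : ValidDecSystem T) {A K L : SGraph}
    {u1 a1 w1 s1 s2 u2 a2 w2 t1 t2 : ℕ}
    (hWA : WellFormed A)
    (h1 : StepAt T u1 a1 w1 s1 s2 A K) (h2 : StepAt T u2 a2 w2 t1 t2 K L)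
    (he2A : (u2, ELab.enc a2, w2) ∈ A.E)
    (hne : (u2, ELab.enc a2, w2) ≠ (u1, ELab.enc a1, w1)) :
    ∃ M, StepAt T u2 a2 w2 t1 t2 A M ∧ StepAt T u1 a1 w1 s1 s2 M L := by
  classical
  obtain ⟨he1, hlu1, hlw1, ρ, hinj, hsrc, htgt, hfresh, hV, hE, hold, hnew⟩ := h1
  obtain ⟨he2, hlu2, hlw2, σ, hinj2, hsrc2, htgt2, hfresh2, hV2, hE2, hold2, hnew2⟩ := h2
  set R1 := T.rule a1 s1 s2 with hR1
  set R2 := T.rule a2 t1 t2 with hR2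
  have hWFF1 := rule_wf hT a1 s1 s2
  have hnoenc1 := rule_noenc hT a1 s1 s2
  have hnoenc2 := rule_noenc hT a2 t1 t2
  obtain ⟨hu1A, hw1A, -⟩ := hWA _ he1
  have hu1A : u1 ∈ A.V := hu1A
  have hw1A : w1 ∈ A.V := hw1A
  obtain ⟨hu2A, hw2A, -⟩ := hWA _ he2A
  have hu2A : u2 ∈ A.V := hu2A
  have hw2A : w2 ∈ A.V := hw2A
  have hAK : A.V ⊆ K.V := hV ▸ Finset.subset_union_left
  have hρK : ∀ x ∈ R1.F.V, ρ x ∈ K.V := fun x hx =>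
    hV ▸ Finset.mem_union_right _ (Finset.mem_image_of_mem ρ hx)
  -- e1 ∉ σ-image, e2 ∉ ρ-image
  have he1nσ : (u1, ELab.enc a1, w1) ∉ R2.F.E.image (fun e => (σ e.1, e.2.1, σ e.2.2)) := by
    intro hc
    obtain ⟨⟨x, lx, y⟩, hxy, heq⟩ := Finset.mem_image.1 hc
    have : lx = ELab.enc a1 := congrArg (fun e => e.2.1) heq
    simpa [this, ELab.isEnc] using hnoenc2 _ hxy
  have he2nρ : (u2, ELab.enc a2, w2) ∉ R1.F.E.image (fun e => (ρ e.1, e.2.1, ρ e.2.2)) := by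
    intro hc
    obtain ⟨⟨x, lx, y⟩, hxy, heq⟩ := Finset.mem_image.1 hc
    have : lx = ELab.enc a2 := congrArg (fun e => e.2.1) heq
    simpa [this, ELab.isEnc] using hnoenc1 _ hxy
  refine ⟨⟨A.V ∪ R2.F.V.image σ,
      (A.E.erase (u2, ELab.enc a2, w2)) ∪ R2.F.E.image (fun e => (σ e.1, e.2.1, σ e.2.2)),
      L.lab⟩, ⟨he2A, ?_, ?_, σ, hinj2, hsrc2, htgt2, ?_, rfl, rfl, ?_, ?_⟩,
    ⟨?_, ?_, ?_, ρ, hinj, hsrc, htgt, ?_, ?_, ?_, ?_, ?_⟩⟩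
  · rw [← hold u2 hu2A]; exact hlu2
  · rw [← hold w2 hw2A]; exact hlw2
  · -- σ fresh wrt A
    intro x hx hxs hxt hc
    exact hfresh2 x hx hxs hxt (hAK hc)
  · -- M.lab = L.lab on A.V
    intro v hv
    rw [hold2 v (hAK hv), hold v hv]
  · -- M.lab (σ x) = R2.F.lab x
    exact hnew2
  · -- e1 ∈ M.E
    exact Finset.mem_union_left _ (Finset.mem_erase.2 ⟨Ne.symm hne, he1⟩)
  · -- M.lab u1
    show L.lab u1 = VLab.node s1
    rw [hold2 u1 (hAK hu1A), hold u1 hu1A]; exact hlu1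
  · show L.lab w1 = VLab.node s2
    rw [hold2 w1 (hAK hw1A), hold w1 hw1A]; exact hlw1
  · -- ρ fresh wrt M.V
    intro x hx hxs hxt hc
    rcases Finset.mem_union.1 hc with h | h
    · exact hfresh x hx hxs hxt h
    · obtain ⟨y, hy, heq⟩ := Finset.mem_image.1 h
      by_cases hys : y = R2.src
      · subst hys; rw [hsrc2] at heq
        exact hfresh x hx hxs hxt (heq ▸ hu2A)
      by_cases hyt : y = R2.tgt
      · subst hyt; rw [htgt2] at heq
        exact hfresh x hx hxs hxt (heq ▸ hw2A)
      · exact hfresh2 y hy hys hyt (heq ▸ hρK x hx)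
  · -- vertex set equality
    show L.V = (A.V ∪ R2.F.V.image σ) ∪ R1.F.V.image ρ
    rw [hV2, hV, Finset.union_right_comm]
  · -- edge set equality
    show L.E = ((A.E.erase (u2, ELab.enc a2, w2)) ∪
        R2.F.E.image (fun e => (σ e.1, e.2.1, σ e.2.2))).erase (u1, ELab.enc a1, w1) ∪
      R1.F.E.image (fun e => (ρ e.1, e.2.1, ρ e.2.2))
    rw [hE2, hE, Finset.erase_union_distrib, Finset.erase_union_distrib,
      Finset.erase_eq_of_notMem he2nρ, Finset.erase_eq_of_notMem he1nσ]
    ext e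
    simp only [Finset.mem_union, Finset.mem_erase]
    tauto
  · -- labels on M.V
    intro v _; rfl
  · -- labels on fresh ρ
    intro x hx
    rw [hold2 _ (hρK x hx), hnew x hx]
lemma giso_symm {H K : SGraph} (h : GIso H K) : GIso K H := by
  classical
  obtain ⟨f, hbij, hlab, hedge⟩ := h
  set g := Function.invFunOn f ↑H.V with hg
  have hinv : Set.InvOn g f ↑H.V ↑K.V := hbij.invOn_invFunOn
  have hbij' : Set.BijOn g ↑K.V ↑H.V := Set.BijOn.symm hinv.symm hbij
  have hgmem : ∀ v ∈ K.V, g v ∈ H.V ∧ f (g v) = v := by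
    intro v hv
    exact ⟨Finset.mem_coe.1 (hbij'.mapsTo (Finset.mem_coe.2 hv)),
      hinv.2 (Finset.mem_coe.2 hv)⟩
  refine ⟨g, hbij', ?_, ?_⟩
  · intro v hv
    obtain ⟨hgv, hfg⟩ := hgmem v hv
    rw [← hfg, hlab _ hgv, hfg]
  · intro p l q hp hq
    obtain ⟨hgp, hfp⟩ := hgmem p hp
    obtain ⟨hgq, hfq⟩ := hgmem q hq
    conv_lhs => rw [← hfp, ← hfq]
    exact (hedge (g p) l (g q) hgp hgq).symm

lemma giso_trans {H K L : SGraph} (h1 : GIso H K) (h2 : GIso K L) : GIso H L := by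
  obtain ⟨f, hbf, hlf, hef⟩ := h1
  obtain ⟨g, hbg, hlg, heg⟩ := h2
  refine ⟨g ∘ f, hbg.comp hbf, ?_, ?_⟩
  · intro v hv
    have hfv : f v ∈ K.V := hbf.mapsTo hv
    simp only [Function.comp_apply]
    rw [hlg _ hfv, hlf _ hv]
  · intro p l q hp hq
    have hfp : f p ∈ K.V := hbf.mapsTo hp
    have hfq : f q ∈ K.V := hbf.mapsTo hq
    simp only [Function.comp_apply]
    rw [hef p l q hp hq, heg _ l _ hfp hfq]

lemma encZero_of_giso {X Y : SGraph} (hWY : WellFormed Y) (hiso : GIso X Y)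
    (hX : encCount X = 0) : encCount Y = 0 := by
  obtain ⟨f, hbij, -, hedge⟩ := hiso
  unfold encCount at hX ⊢
  rw [Finset.card_eq_zero] at hX ⊢
  rw [Finset.eq_empty_iff_forall_notMem] at hX ⊢
  rintro ⟨p, l, q⟩ hmem
  obtain ⟨hE, henc⟩ := Finset.mem_filter.1 hmem
  obtain ⟨hpY, hqY, -⟩ := hWY _ hE
  obtain ⟨u, hu, rfl⟩ := hbij.surjOn (Finset.mem_coe.2 hpY)
  obtain ⟨w, hw, rfl⟩ := hbij.surjOn (Finset.mem_coe.2 hqY)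
  have hXE : (u, l, w) ∈ X.E :=
    (hedge u l w (Finset.mem_coe.1 hu) (Finset.mem_coe.1 hw)).2 hE
  exact hX _ (Finset.mem_filter.2 ⟨hXE, henc⟩)

lemma decstep_inv {T : DecSystem} (hT : ValidDecSystem T) {H K : SGraph}
    (hI : GInv H) (h : DecStep T H K) : GInv K := by
  obtain ⟨u, a, w, s1, s2, h⟩ := h
  exact step_inv hT hI h

lemma decstep_encCount {T : DecSystem} (hT : ValidDecSystem T) {H K : SGraph}
    (h : DecStep T H K) : encCount K + 1 = encCount H := by
  obtain ⟨u, a, w, s1, s2, h⟩ := h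
  exact step_encCount hT h

lemma chain_inv {T : DecSystem} (hT : ValidDecSystem T) {H X : SGraph}
    (hI : GInv H) (h : Relation.ReflTransGen (DecStep T) H X) : GInv X := by
  induction h with
  | refl => exact hI
  | tail _ hstep ih => exact decstep_inv hT ih hstep

lemma exists_fulldecode {T : DecSystem} (hT : ValidDecSystem T) :
    ∀ n (H : SGraph), encCount H = n → GInv H → ∃ H', FullDecode T H H' := by
  intro n
  induction n with
  | zero => exact fun H hz _ => ⟨H, Relation.ReflTransGen.refl, hz⟩
  | succ n ih =>
    intro H hn hI
    have hpos : 0 < (H.E.filter (fun e => e.2.1.isEnc = true)).card := by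
      unfold encCount at hn; omega
    obtain ⟨⟨u, l, w⟩, hmem⟩ := Finset.card_pos.1 hpos
    obtain ⟨hE, henc⟩ := Finset.mem_filter.1 hmem
    obtain ⟨a, rfl⟩ : ∃ a, l = ELab.enc a := by
      cases l with
      | plain _ => simp [ELab.isEnc] at henc
      | enc a => exact ⟨a, rfl⟩
    obtain ⟨⟨t1, ht1⟩, ⟨t2, ht2⟩⟩ := hI.2 _ hE rfl
    obtain ⟨K, hst⟩ := exist_step hT hI hE ht1 ht2
    have hIK := step_inv hT hI hst
    have hcnt := step_encCount hT hst
    obtain ⟨H', hch, hz⟩ := ih K (by omega) hIK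
    exact ⟨H', Relation.ReflTransGen.head ⟨u, a, w, t1, t2, hst⟩ hch, hz⟩

lemma transport_chain {T : DecSystem} (hT : ValidDecSystem T) {X : SGraph} :
    ∀ {A : SGraph}, Relation.ReflTransGen (DecStep T) A X → ∀ B, GInv A → GInv B → GIso A B →
    ∃ Y, Relation.ReflTransGen (DecStep T) B Y ∧ GIso X Y := by
  intro A h
  induction h using Relation.ReflTransGen.head_induction_on with
  | refl => exact fun B _ _ hiso => ⟨B, Relation.ReflTransGen.refl, hiso⟩
  | head hstep hchain ih =>
    rename_i A0 c
    intro B hIA hIB hiso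
    obtain ⟨f, hbij, hlab, hedge⟩ := hiso
    obtain ⟨u, a, w, s1, s2, hst⟩ := hstep
    obtain ⟨huA, hwA, -⟩ := hIA.1 _ hst.1
    have huA : u ∈ A0.V := huA
    have hwA : w ∈ A0.V := hwA
    have hBedge : (f u, ELab.enc a, f w) ∈ B.E := (hedge u _ w huA hwA).1 hst.1
    have hBlu : B.lab (f u) = VLab.node s1 := by rw [hlab u huA]; exact hst.2.1
    have hBlw : B.lab (f w) = VLab.node s2 := by rw [hlab w hwA]; exact hst.2.2.1
    obtain ⟨K', hst'⟩ := exist_step hT hIB hBedge hBlu hBlw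
    have hiso' : GIso c K' :=
      step_transport hT hIA.1 hIB.1 hbij hlab hedge hst hst'
    have hIc : GInv c := step_inv hT hIA hst
    have hIK' : GInv K' := step_inv hT hIB hst'
    obtain ⟨Y, hch, hXY⟩ := ih K' hIc hIK' hiso'
    exact ⟨Y, Relation.ReflTransGen.head ⟨_, _, _, _, _, hst'⟩ hch, hXY⟩
lemma main_unique {T : DecSystem} (hT : ValidDecSystem T) :
    ∀ m (A X Y : SGraph), encCount A = m → GInv A →
      FullDecode T A X → FullDecode T A Y → GIso X Y := by
  intro m
  induction m using Nat.strong_induction_on with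
  | _ m ih =>
    intro A X Y hm hIA hFX hFY
    obtain ⟨hcX, hzX⟩ := hFX
    obtain ⟨hcY, hzY⟩ := hFY
    rcases Nat.eq_zero_or_pos m with rfl | hpos
    · rcases Relation.ReflTransGen.cases_head hcX with rfl | ⟨K, hstep, -⟩
      · rcases Relation.ReflTransGen.cases_head hcY with rfl | ⟨K, hstep, -⟩
        · exact giso_refl _
        · exact absurd hstep (no_step_of_encZero hm)
      · exact absurd hstep (no_step_of_encZero hm)
    · rcases Relation.ReflTransGen.cases_head hcX with rfl | ⟨K1, hs1, hc1⟩
      · rw [hm] at hzX; omega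
      rcases Relation.ReflTransGen.cases_head hcY with rfl | ⟨K2, hs2, hc2⟩
      · rw [hm] at hzY; omega
      have hIK1 : GInv K1 := decstep_inv hT hIA hs1
      have hIK2 : GInv K2 := decstep_inv hT hIA hs2
      have hcnt1 : encCount K1 + 1 = m := by rw [← hm]; exact decstep_encCount hT hs1
      have hcnt2 : encCount K2 + 1 = m := by rw [← hm]; exact decstep_encCount hT hs2
      obtain ⟨u1, a1, w1, s1, s2, h1⟩ := hs1
      obtain ⟨u2, a2, w2, t1, t2, h2⟩ := hs2
      by_cases heq : (u2, ELab.enc a2, w2) = (u1, ELab.enc a1, w1)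
      · -- same encoding edge
        obtain ⟨rfl, rfl, rfl⟩ : u2 = u1 ∧ a2 = a1 ∧ w2 = w1 := by
          simpa [Prod.ext_iff] using heq
        have ht1 : t1 = s1 := by
          have h := h1.2.1.symm.trans h2.2.1
          injection h with hh
          exact hh.symm
        have ht2 : t2 = s2 := by
          have h := h1.2.2.1.symm.trans h2.2.2.1
          injection h with hh
          exact hh.symm
        subst ht1; subst ht2
        have hisoK : GIso K1 K2 :=
          step_transport hT hIA.1 hIA.1 (Set.bijOn_id _) (fun _ _ => rfl)
            (fun _ _ _ _ _ => Iff.rfl) h1 h2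
        obtain ⟨Y', hchY', hXY'⟩ := transport_chain hT hc1 K2 hIK1 hIK2 hisoK
        have hIY' : GInv Y' := chain_inv hT hIK2 hchY'
        have hzY' : encCount Y' = 0 := encZero_of_giso hIY'.1 hXY' hzX
        have hYY' : GIso Y' Y :=
          ih (encCount K2) (by omega) K2 Y' Y rfl hIK2 ⟨hchY', hzY'⟩ ⟨hc2, hzY⟩
        exact giso_trans hXY' hYY'
      · -- different encoding edges
        obtain ⟨he1, hlu1, hlw1, ρ, -, -, -, -, -, hEK1, holdK1, -⟩ := id h1
        obtain ⟨hu2A, hw2A, -⟩ := hIA.1 _ h2.1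
        have hu2A : u2 ∈ A.V := hu2A
        have hw2A : w2 ∈ A.V := hw2A
        have he2K1 : (u2, ELab.enc a2, w2) ∈ K1.E := by
          rw [hEK1]
          exact Finset.mem_union_left _ (Finset.mem_erase.2 ⟨heq, h2.1⟩)
        have hK1lu2 : K1.lab u2 = VLab.node t1 := (holdK1 u2 hu2A).trans h2.2.1
        have hK1lw2 : K1.lab w2 = VLab.node t2 := (holdK1 w2 hw2A).trans h2.2.2.1
        obtain ⟨L1, hL1⟩ := exist_step hT hIK1 he2K1 hK1lu2 hK1lw2
        obtain ⟨M, hAM, hML1⟩ := step_commute hT hIA.1 h1 hL1 h2.1 heq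
        have hisoK2M : GIso K2 M :=
          step_transport hT hIA.1 hIA.1 (Set.bijOn_id _) (fun _ _ => rfl)
            (fun _ _ _ _ _ => Iff.rfl) h2 hAM
        have hIL1 : GInv L1 := step_inv hT hIK1 hL1
        have hIM : GInv M := step_inv hT hIA hAM
        obtain ⟨Z, hchZ, hzZ⟩ := exists_fulldecode hT (encCount L1) L1 rfl hIL1
        have hdecK1Z : FullDecode T K1 Z :=
          ⟨Relation.ReflTransGen.head ⟨u2, a2, w2, t1, t2, hL1⟩ hchZ, hzZ⟩
        have hXZ : GIso X Z :=
          ih (encCount K1) (by omega) K1 X Z rfl hIK1 ⟨hc1, hzX⟩ hdecK1Z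
        have hchMZ : Relation.ReflTransGen (DecStep T) M Z :=
          Relation.ReflTransGen.head ⟨u1, a1, w1, s1, s2, hML1⟩ hchZ
        obtain ⟨Z', hchZ', hZZ'⟩ := transport_chain hT hchMZ K2 hIM hIK2 (giso_symm hisoK2M)
        have hIZ' : GInv Z' := chain_inv hT hIK2 hchZ'
        have hzZ' : encCount Z' = 0 := encZero_of_giso hIZ'.1 hZZ' hzZ
        have hZ'Y : GIso Z' Y :=
          ih (encCount K2) (by omega) K2 Z' Y rfl hIK2 ⟨hchZ', hzZ'⟩ ⟨hc2, hzY⟩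
        exact giso_trans hXZ (giso_trans hZZ' hZ'Y)

lemma count_lemma {T : DecSystem} (hT : ValidDecSystem T) :
    ∀ n (H H' : SGraph), DecStepN T n H H' → encCount H' = 0 → n = encCount H := by
  intro n
  induction n with
  | zero =>
    intro H H' h hz
    cases h
    omega
  | succ n ih =>
    intro H H' h hz
    obtain ⟨K, hs, hrest⟩ := h
    have h1 := decstep_encCount hT hs
    have h2 := ih K H' hrest hz
    omega
/-- Fully decoding an encoded string graph takes exactly as many
steps as there are encoding edges, and the result is unique up to isomorphism. -/
theorem decoding_step_count_and_uniqueness (T : DecSystem) (hT : ValidDecSystem T)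
    (H : SGraph) (hH : EncodedSG H) :
    (∀ n H', DecStepN T n H H' → encCount H' = 0 → n = encCount H) ∧
    (∀ H' H'', FullDecode T H H' → FullDecode T H H'' → GIso H' H'') := by
  constructor
  · intro n H' h hz
    exact count_lemma hT n H H' h hz
  · intro H' H'' h1 h2
    exact main_unique hT (encCount H) H H' H'' rfl (inv_of_encoded hH) h1 h2
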